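/- Let C be the A-partite power system constructed from an A-partite system B by taking as vertices of part i all functions {1,...,N} → X^i_B, with relations and functions defined coordinatewise. If every irreducible subsystem of B is transversal, then every irreducible subsystem of C is transversal. -/
import Mathlib


/-- A language with relation symbols and partial function symbols; functions have a
domain arity and a range arity (values are sets of `fnRng F` vertices). -/
structure PLang where
  Rel : Type
  relAr : Rel → ℕ
  Fn : Type
  fnDom : Fn → ℕ
  fnRng : Fn → ℕ

/-- A structure for a language with relations and partial functions: each function symbol
is interpreted as a partial map from `fnDom`-tuples to (unordered) sets of vertices,
`none` meaning "undefined". -/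
structure PStruc (L : PLang) (V : Type) where
  rel : ∀ R : L.Rel, Set ((Fin (L.relAr R)) → V)
  fn : ∀ F : L.Fn, ((Fin (L.fnDom F)) → V) → Option (Set V)

/-- `S` is (the vertex set of) a substructure of `A`: it is closed under all partial
functions of `A`. -/
def PStruc.ClosedIn {L : PLang} {V : Type} (A : PStruc L V) (S : Set V) : Prop :=
  ∀ (F : L.Fn) (t : Fin (L.fnDom F) → V), (∀ i, t i ∈ S) →
    ∀ s : Set V, A.fn F t = some s → s ⊆ S

/-- The closure of `B` in `A`: the smallest substructure of `A` containing `B`. -/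
def PStruc.Cl {L : PLang} {V : Type} (A : PStruc L V) (B : Set V) : Set V :=
  ⋂₀ {S : Set V | A.ClosedIn S ∧ B ⊆ S}

/-- An embedding of structures with relations and partial functions: injective, preserves
and reflects relations, preserves and reflects function domains, and commutes with
function values. -/
def IsEmb {L : PLang} {α β : Type} (A : PStruc L α) (B : PStruc L β) (f : α → β) : Prop :=
  Function.Injective f ∧
  (∀ (R : L.Rel) (t : Fin (L.relAr R) → α),
    t ∈ A.rel R ↔ (fun i => f (t i)) ∈ B.rel R) ∧
  (∀ (F : L.Fn) (t : Fin (L.fnDom F) → α),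
    ((A.fn F t).isSome ↔ (B.fn F (fun i => f (t i))).isSome) ∧
    (∀ s, A.fn F t = some s → B.fn F (fun i => f (t i)) = some (f '' s)))

/-- `C`, with embeddings `β1, β2`, is a free amalgam of `B1` and `B2` over `A`
(with respect to the embeddings `α1 : A → B1`, `α2 : A → B2`): the two copies meet
exactly in the copy of `A`, they cover `C`, and no relational tuple or
function-domain tuple of `C` uses vertices of both sides. -/
def IsFreeAmalgam {L : PLang} {a b1 b2 c : ℕ} (_A : PStruc L (Fin a))
    (B1 : PStruc L (Fin b1)) (B2 : PStruc L (Fin b2)) (C : PStruc L (Fin c))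
    (α1 : Fin a → Fin b1) (α2 : Fin a → Fin b2)
    (β1 : Fin b1 → Fin c) (β2 : Fin b2 → Fin c) : Prop :=
  IsEmb B1 C β1 ∧ IsEmb B2 C β2 ∧ (∀ x, β1 (α1 x) = β2 (α2 x)) ∧
  (∀ x1 x2, β1 x1 = β2 x2 → ∃ x, x1 = α1 x ∧ x2 = α2 x) ∧
  (∀ z, z ∈ Set.range β1 ∪ Set.range β2) ∧
  (∀ (R : L.Rel) (t : Fin (L.relAr R) → Fin c), t ∈ C.rel R →
    (∀ i, t i ∈ Set.range β1) ∨ (∀ i, t i ∈ Set.range β2)) ∧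
  (∀ (F : L.Fn) (t : Fin (L.fnDom F) → Fin c), (C.fn F t).isSome →
    (∀ i, t i ∈ Set.range β1) ∨ (∀ i, t i ∈ Set.range β2))

/-- A free amalgamation class of finite structures: hereditary (closed under substructures
up to isomorphism), joint embedding, and free amalgamation. -/
def FreeAmalgClass {L : PLang} (K : ∀ n : ℕ, PStruc L (Fin n) → Prop) : Prop :=
  (∀ n A, K n A → ∀ (m : ℕ) (B : PStruc L (Fin m)) (f : Fin m → Fin n),
    IsEmb B A f → K m B) ∧
  (∀ n A m B, K n A → K m B →
    ∃ (p : ℕ) (C : PStruc L (Fin p)) (f : Fin n → Fin p) (g : Fin m → Fin p),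
      K p C ∧ IsEmb A C f ∧ IsEmb B C g) ∧
  (∀ (a : ℕ) (A : PStruc L (Fin a)) (b1 : ℕ) (B1 : PStruc L (Fin b1))
      (b2 : ℕ) (B2 : PStruc L (Fin b2)) (α1 : Fin a → Fin b1) (α2 : Fin a → Fin b2),
    K a A → K b1 B1 → K b2 B2 → IsEmb A B1 α1 → IsEmb A B2 α2 →
    ∃ (c : ℕ) (C : PStruc L (Fin c)) (β1 : Fin b1 → Fin c) (β2 : Fin b2 → Fin c),
      K c C ∧ IsFreeAmalgam A B1 B2 C α1 α2 β1 β2)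

/-- An order-preserving embedding between linearly ordered structures. -/
def OrdEmb {L : PLang} {α β : Type} (A : PStruc L α) (rA : α → α → Prop)
    (B : PStruc L β) (rB : β → β → Prop) (f : α → β) : Prop :=
  IsEmb A B f ∧ ∀ x y, rA x y → rB (f x) (f y)

/-- An `A`-partite `L`-system over a structure `A` with vertex set `Fin a`: a structure
`str` with a projection `part` onto `A` which is a homomorphism, and such that every
relational tuple, and every function-domain tuple together with its value, is transversal
(meets each part in at most one vertex). -/
structure Partite {L : PLang} {a : ℕ} (A : PStruc L (Fin a)) (β : Type) where
  str : PStruc L β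
  part : β → Fin a
  hom_rel : ∀ (R : L.Rel) (t : Fin (L.relAr R) → β),
    t ∈ str.rel R → (fun i => part (t i)) ∈ A.rel R
  hom_fn : ∀ (F : L.Fn) (t : Fin (L.fnDom F) → β) (s : Set β),
    str.fn F t = some s → A.fn F (fun i => part (t i)) = some (part '' s)
  trans_rel : ∀ (R : L.Rel) (t : Fin (L.relAr R) → β), t ∈ str.rel R →
    ∀ i j, part (t i) = part (t j) → t i = t j
  trans_fn : ∀ (F : L.Fn) (t : Fin (L.fnDom F) → β) (s : Set β), str.fn F t = some s →
    (∀ i j, part (t i) = part (t j) → t i = t j) ∧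
    (∀ x ∈ s, ∀ i, part x = part (t i) → x = t i) ∧
    (∀ x ∈ s, ∀ y ∈ s, part x = part y → x = y)

/-- Vertices of the `N`-th power of the partite system `B`: functions `Fin N → β`
taking values in a single part of `B`. -/
def PowV {L : PLang} {a : ℕ} {A : PStruc L (Fin a)} {β : Type}
    (B : Partite A β) (N : ℕ) : Type :=
  {f : Fin N → β // ∀ i j, B.part (f i) = B.part (f j)}

/-- The power structure: relations hold coordinatewise, and a function value is defined
iff it is defined at every coordinate, in which case it is the set of part-consistent
coordinatewise selectors of the coordinate values. -/
def powStr {L : PLang} {a : ℕ} {A : PStruc L (Fin a)} {β : Type}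
    (B : Partite A β) (N : ℕ) : PStruc L (PowV B N) where
  rel R := {t | ∀ i : Fin N, (fun j => (t j).1 i) ∈ B.str.rel R}
  fn F t :=
    if h : ∀ i : Fin N, (B.str.fn F (fun j => (t j).1 i)).isSome then
      some {g : PowV B N | ∀ i : Fin N, g.1 i ∈ (B.str.fn F (fun j => (t j).1 i)).get (h i)}
    else none

/-- The projection of the power system to the parts of `A` (requires `0 < N`). -/
def powPart {L : PLang} {a : ℕ} {A : PStruc L (Fin a)} {β : Type}
    (B : Partite A β) (N : ℕ) (hN : 0 < N) : PowV B N → Fin a :=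
  fun g => B.part (g.1 ⟨0, hN⟩)

/-- The closed set `S` carries an irreducible substructure of `D`: it cannot be written
as a free amalgamation of two proper substructures (two proper closed subsets covering
`S` such that no relational or function-domain tuple of `D` inside `S` meets both
parts outside the intersection). -/
def IrredSub {L : PLang} {V : Type} (D : PStruc L V) (S : Set V) : Prop :=
  D.ClosedIn S ∧
  ¬∃ S1 S2 : Set V, S1 ⊆ S ∧ S2 ⊆ S ∧ S1 ≠ S ∧ S2 ≠ S ∧ S1 ∪ S2 = S ∧
    D.ClosedIn S1 ∧ D.ClosedIn S2 ∧
    (∀ (R : L.Rel) (t : Fin (L.relAr R) → V), t ∈ D.rel R → (∀ i, t i ∈ S) →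
      ((∀ i, t i ∈ S1) ∨ (∀ i, t i ∈ S2))) ∧
    (∀ (F : L.Fn) (t : Fin (L.fnDom F) → V), (D.fn F t).isSome → (∀ i, t i ∈ S) →
      ((∀ i, t i ∈ S1) ∨ (∀ i, t i ∈ S2)))

lemma cl_closed {L : PLang} {V : Type} (A : PStruc L V) (B : Set V) :
    A.ClosedIn (A.Cl B) := by
  intro F t ht s hs x hx
  rw [PStruc.Cl, Set.mem_sInter]
  intro S' hS'
  exact hS'.1 F t (fun i => Set.mem_sInter.mp (ht i) S' hS') s hs hx

lemma subset_cl {L : PLang} {V : Type} (A : PStruc L V) (B : Set V) :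
    B ⊆ A.Cl B := by
  intro x hx
  rw [PStruc.Cl, Set.mem_sInter]
  exact fun S' hS' => hS'.2 hx

lemma cl_min {L : PLang} {V : Type} (A : PStruc L V) (B S : Set V)
    (hS : A.ClosedIn S) (hBS : B ⊆ S) : A.Cl B ⊆ S := by
  intro x hx
  exact Set.mem_sInter.mp hx S ⟨hS, hBS⟩

lemma powfn_eq {L : PLang} {a : ℕ} {A : PStruc L (Fin a)} {β : Type}
    (B : Partite A β) (N : ℕ) (F : L.Fn) (t : Fin (L.fnDom F) → PowV B N)
    (s : Set (PowV B N)) (hs : (powStr B N).fn F t = some s) :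
    ∃ h : ∀ k : Fin N, (B.str.fn F (fun j => (t j).1 k)).isSome,
      s = {g : PowV B N |
        ∀ k : Fin N, g.1 k ∈ (B.str.fn F (fun j => (t j).1 k)).get (h k)} := by
  rw [powStr] at hs
  simp only at hs
  split at hs
  · rename_i h
    exact ⟨h, (Option.some_injective _ hs).symm⟩
  · exact absurd hs (by simp)

lemma powfn_some {L : PLang} {a : ℕ} {A : PStruc L (Fin a)} {β : Type}
    (B : Partite A β) (N : ℕ) (F : L.Fn) (t : Fin (L.fnDom F) → PowV B N)
    (hs : ((powStr B N).fn F t).isSome) :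
    ∀ k : Fin N, (B.str.fn F (fun j => (t j).1 k)).isSome := by
  rw [powStr] at hs
  simp only at hs
  split at hs
  · rename_i h; exact h
  · simp at hs

lemma img_irred {L : PLang} {a : ℕ} {A : PStruc L (Fin a)} {β : Type}
    (B : Partite A β) (N : ℕ) (S : Set (PowV B N))
    (hS : IrredSub (powStr B N) S) (i : Fin N) :
    IrredSub B.str (B.str.Cl ((fun h : PowV B N => h.1 i) '' S)) := by
  set Img : Set β := (fun h : PowV B N => h.1 i) '' S with hImg
  set T : Set β := B.str.Cl Img with hT
  refine ⟨cl_closed _ _, ?_⟩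
  rintro ⟨T1, T2, hT1, hT2, hT1ne, hT2ne, hcup, hc1, hc2, hrel, hfn⟩
  apply hS.2
  refine ⟨{h ∈ S | h.1 i ∈ T1}, {h ∈ S | h.1 i ∈ T2},
    fun h hh => hh.1, fun h hh => hh.1, ?_, ?_, ?_, ?_, ?_, ?_, ?_⟩
  · -- S1 ≠ S
    intro hEq
    apply hT1ne
    refine le_antisymm hT1 (cl_min _ _ _ hc1 ?_)
    rintro x ⟨h, hhS, rfl⟩
    have : h ∈ {h ∈ S | h.1 i ∈ T1} := by rw [hEq]; exact hhS
    exact this.2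
  · intro hEq
    apply hT2ne
    refine le_antisymm hT2 (cl_min _ _ _ hc2 ?_)
    rintro x ⟨h, hhS, rfl⟩
    have : h ∈ {h ∈ S | h.1 i ∈ T2} := by rw [hEq]; exact hhS
    exact this.2
  · -- union
    ext h
    constructor
    · rintro (hh | hh) <;> exact hh.1
    · intro hh
      have hmem : h.1 i ∈ T1 ∪ T2 := hcup ▸ subset_cl B.str Img ⟨h, hh, rfl⟩
      rcases hmem with hm | hm
      · exact Or.inl ⟨hh, hm⟩
      · exact Or.inr ⟨hh, hm⟩
  · -- S1 closed
    intro F t ht s hs g hg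
    obtain ⟨hall, rfl⟩ := powfn_eq B N F t s hs
    refine ⟨hS.1 F t (fun j => (ht j).1) _ hs hg, ?_⟩
    exact hc1 F (fun j => (t j).1 i) (fun j => (ht j).2) _
      (Option.some_get (hall i)).symm (hg i)
  · intro F t ht s hs g hg
    obtain ⟨hall, rfl⟩ := powfn_eq B N F t s hs
    refine ⟨hS.1 F t (fun j => (ht j).1) _ hs hg, ?_⟩
    exact hc2 F (fun j => (t j).1 i) (fun j => (ht j).2) _
      (Option.some_get (hall i)).symm (hg i)
  · -- relation splitting
    intro R t htR hts
    have hmem : ∀ j, (t j).1 i ∈ T := fun j =>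
      subset_cl B.str Img ⟨t j, hts j, rfl⟩
    rcases hrel R (fun j => (t j).1 i) (htR i) hmem with h1 | h1
    · exact Or.inl fun j => ⟨hts j, h1 j⟩
    · exact Or.inr fun j => ⟨hts j, h1 j⟩
  · -- function splitting
    intro F t htF hts
    have hall := powfn_some B N F t htF
    have hmem : ∀ j, (t j).1 i ∈ T := fun j =>
      subset_cl B.str Img ⟨t j, hts j, rfl⟩
    rcases hfn F (fun j => (t j).1 i) (hall i) hmem with h1 | h1
    · exact Or.inl fun j => ⟨hts j, h1 j⟩
    · exact Or.inr fun j => ⟨hts j, h1 j⟩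

/-- If every irreducible subsystem of the partite system `B` is transversal (the
projection is injective on it), then every irreducible subsystem of the power system
of `B` is transversal. -/
theorem stmt10 {L : PLang} {a : ℕ} {A : PStruc L (Fin a)} {β : Type}
    (B : Partite A β) (N : ℕ) (hN : 0 < N)
    (hB : ∀ S : Set β, IrredSub B.str S → Set.InjOn B.part S) :
    ∀ S : Set (PowV B N), IrredSub (powStr B N) S →
      Set.InjOn (powPart B N hN) S := by
  intro S hS f hf g hg hfg
  have hpart : ∀ i : Fin N, B.part (f.1 i) = B.part (g.1 i) := by
    intro i
    calc B.part (f.1 i) = B.part (f.1 ⟨0, hN⟩) := f.2 i ⟨0, hN⟩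
      _ = B.part (g.1 ⟨0, hN⟩) := hfg
      _ = B.part (g.1 i) := g.2 ⟨0, hN⟩ i
  have hco : ∀ i : Fin N, f.1 i = g.1 i := by
    intro i
    have hirr := img_irred B N S hS i
    have hinj := hB _ hirr
    exact hinj (subset_cl B.str _ ⟨f, hf, rfl⟩)
      (subset_cl B.str _ ⟨g, hg, rfl⟩) (hpart i)
  exact Subtype.ext (funext hco)
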